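/- Let r ∈ (0, 1) and let U, V_1, V_2, V_3 be independent random variables, each uniformly distributed on (0, 1). Set T = U^r and A = max(V_1^{r/(1−r)}, V_2 V_3). Then A^T has the same distribution as T; that is, the inverse tower distribution of U^r is the distribution of max(V_1^{r/(1−r)}, V_2 V_3). -/

import Mathlib

open MeasureTheory ProbabilityTheory Set Real

lemma st19_unif_rpow_cdf {s a : ℝ} (hs : 0 < s) (ha : a ∈ Set.Ioo (0:ℝ) 1) :
    volume.restrict (Set.Ioo (0:ℝ) 1) {v : ℝ | v ^ s ≤ a} = ENNReal.ofReal (a ^ s⁻¹) := by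
  have hmeas : MeasurableSet {v : ℝ | v ^ s ≤ a} := by
    have : Measurable fun v : ℝ => v ^ s := by fun_prop
    exact measurableSet_le this measurable_const
  rw [Measure.restrict_apply hmeas]
  have hset : {v : ℝ | v ^ s ≤ a} ∩ Set.Ioo 0 1 = Set.Ioc 0 (a ^ s⁻¹) := by
    ext v
    simp only [mem_inter_iff, mem_setOf_eq, mem_Ioo, mem_Ioc]
    constructor
    · rintro ⟨h1, h2, h3⟩
      exact ⟨h2, (Real.le_rpow_inv_iff_of_pos h2.le ha.1.le hs).2 h1⟩
    · rintro ⟨h2, h3⟩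
      have hlt : a ^ s⁻¹ < 1 := Real.rpow_lt_one ha.1.le ha.2 (inv_pos.2 hs)
      exact ⟨(Real.le_rpow_inv_iff_of_pos h2.le ha.1.le hs).1 h3, h2, h3.trans_lt hlt⟩
  rw [hset, Real.volume_Ioc, sub_zero]

lemma st19_prod_mul_cdf {a : ℝ} (ha : a ∈ Set.Ioo (0:ℝ) 1) :
    ((volume.restrict (Set.Ioo (0:ℝ) 1)).prod (volume.restrict (Set.Ioo (0:ℝ) 1)))
      {q : ℝ × ℝ | q.1 * q.2 ≤ a} = ENNReal.ofReal (a - a * Real.log a) := by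
  set μ₀ := volume.restrict (Set.Ioo (0:ℝ) 1) with hμ₀
  have hsm : MeasurableSet {q : ℝ × ℝ | q.1 * q.2 ≤ a} :=
    measurableSet_le (measurable_fst.mul measurable_snd) measurable_const
  rw [Measure.prod_apply hsm]
  -- slices
  have hg : ∀ x ∈ Set.Ioo (0:ℝ) 1,
      μ₀ (Prod.mk x ⁻¹' {q : ℝ × ℝ | q.1 * q.2 ≤ a}) = ENNReal.ofReal (min (a / x) 1) := by
    intro x hx
    have hxm : MeasurableSet {y : ℝ | x * y ≤ a} :=
      measurableSet_le (measurable_const.mul measurable_id) measurable_const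
    have hpre : Prod.mk x ⁻¹' {q : ℝ × ℝ | q.1 * q.2 ≤ a} = {y : ℝ | x * y ≤ a} := rfl
    rw [hpre, hμ₀, Measure.restrict_apply hxm]
    rcases le_or_gt x a with hxa | hax
    · have h1 : (1:ℝ) ≤ a / x := (one_le_div hx.1).2 hxa
      have : {y : ℝ | x * y ≤ a} ∩ Set.Ioo 0 1 = Set.Ioo 0 1 := by
        apply inter_eq_self_of_subset_right
        intro y hy
        have : x * y ≤ x * 1 := by nlinarith [hy.2, hx.1]
        simpa using this.trans (by linarith)
      rw [this, Real.volume_Ioo, min_eq_right h1]; norm_num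
    · have h1 : a / x < 1 := (div_lt_one hx.1).2 hax
      have : {y : ℝ | x * y ≤ a} ∩ Set.Ioo 0 1 = Set.Ioc 0 (a / x) := by
        ext y
        simp only [mem_inter_iff, mem_setOf_eq, mem_Ioo, mem_Ioc]
        constructor
        · rintro ⟨h2, h3, h4⟩
          exact ⟨h3, (le_div_iff₀ hx.1).2 (by linarith [mul_comm x y])⟩
        · rintro ⟨h3, h4⟩
          refine ⟨by rw [mul_comm]; exact (le_div_iff₀ hx.1).1 h4, h3, h4.trans_lt h1⟩
      rw [this, Real.volume_Ioc, sub_zero, min_eq_left h1.le]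
  have hcongr : ∫⁻ x, μ₀ (Prod.mk x ⁻¹' {q : ℝ × ℝ | q.1 * q.2 ≤ a}) ∂μ₀
      = ∫⁻ x in Set.Ioo (0:ℝ) 1, ENNReal.ofReal (min (a / x) 1) := by
    rw [hμ₀]
    exact setLIntegral_congr_fun_ae measurableSet_Ioo (ae_of_all _ hg)
  rw [hcongr]
  -- to real integral
  have hmeasg : Measurable fun x : ℝ => min (a / x) 1 :=
    (measurable_const.div measurable_id).min measurable_const
  have hbound : ∀ x : ℝ, 0 < x → |min (a / x) 1| ≤ 1 := by
    intro x hx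
    rw [abs_le]
    constructor
    · have : (0:ℝ) ≤ min (a / x) 1 := le_min (div_nonneg ha.1.le hx.le) zero_le_one
      linarith
    · exact min_le_right _ _
  have hint : IntegrableOn (fun x : ℝ => min (a / x) 1) (Set.Ioo 0 1) volume := by
    apply Measure.integrableOn_of_bounded (M := 1)
    · rw [Real.volume_Ioo]; norm_num
    · exact hmeasg.aestronglyMeasurable
    · filter_upwards [self_mem_ae_restrict measurableSet_Ioo] with x hx
      exact hbound x hx.1
  rw [← ofReal_integral_eq_lintegral_ofReal hint ?nn]
  case nn =>
    filter_upwards [self_mem_ae_restrict measurableSet_Ioo] with x hx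
    exact le_min (div_nonneg ha.1.le hx.1.le) zero_le_one
  congr 1
  -- real integral computation
  have h0a : (0:ℝ) ≤ a := ha.1.le
  have hi1 : IntervalIntegrable (fun x : ℝ => min (a / x) 1) volume 0 a := by
    rw [intervalIntegrable_iff_integrableOn_Ioc_of_le h0a]
    apply Measure.integrableOn_of_bounded (M := 1) measure_Ioc_lt_top.ne hmeasg.aestronglyMeasurable
    filter_upwards [self_mem_ae_restrict measurableSet_Ioc] with x hx
    exact hbound x hx.1
  have hi2 : IntervalIntegrable (fun x : ℝ => min (a / x) 1) volume a 1 := by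
    rw [intervalIntegrable_iff_integrableOn_Ioc_of_le ha.2.le]
    apply Measure.integrableOn_of_bounded (M := 1) measure_Ioc_lt_top.ne hmeasg.aestronglyMeasurable
    filter_upwards [self_mem_ae_restrict measurableSet_Ioc] with x hx
    exact hbound x (ha.1.trans hx.1)
  rw [← integral_Ioc_eq_integral_Ioo, ← intervalIntegral.integral_of_le zero_le_one,
    ← intervalIntegral.integral_add_adjacent_intervals hi1 hi2]
  have e1 : ∫ x in (0:ℝ)..a, min (a / x) 1 = a := by
    rw [intervalIntegral.integral_congr_ae (g := fun _ => (1:ℝ)) ?_]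
    · simp
    · filter_upwards with x hx
      rw [Set.uIoc_of_le h0a] at hx
      exact min_eq_right ((one_le_div hx.1).2 hx.2)
  have e2 : ∫ x in a..(1:ℝ), min (a / x) 1 = -(a * Real.log a) := by
    rw [intervalIntegral.integral_congr_ae (g := fun x => a * (1 / x)) ?_]
    · rw [intervalIntegral.integral_const_mul, integral_one_div ?h0]
      case h0 =>
        rw [Set.uIcc_of_le ha.2.le]
        intro h
        exact absurd (mem_Icc.1 h).1 (by linarith [ha.1])
      rw [Real.log_div one_ne_zero ha.1.ne', Real.log_one]
      ring
    · filter_upwards with x hx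
      rw [Set.uIoc_of_le ha.2.le] at hx
      have hx0 : 0 < x := ha.1.trans hx.1
      rw [min_eq_left ((div_lt_one hx0).2 hx.1).le, mul_one_div]
  rw [e1, e2]; ring

lemma st19_hasDeriv {t r : ℝ} (ht : t ∈ Set.Ioo (0:ℝ) 1) (hr : r ∈ Set.Ioo (0:ℝ) 1) {u : ℝ}
    (hu : 0 < u) :
    HasDerivAt (fun u : ℝ => u * t ^ ((u ^ r)⁻¹ * r⁻¹))
      (t ^ ((u ^ r)⁻¹ * r⁻¹) * (1 - (u ^ r)⁻¹ * Real.log t)) u := by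
  have hur : 0 < u ^ r := Real.rpow_pos_of_pos hu r
  have h1 : HasDerivAt (fun u : ℝ => u ^ r) (r * u ^ (r - 1)) u :=
    Real.hasDerivAt_rpow_const (Or.inl hu.ne')
  have h2 : HasDerivAt (fun u : ℝ => (u ^ r)⁻¹) (-(r * u ^ (r - 1)) / (u ^ r) ^ 2) u :=
    h1.inv hur.ne'
  have h3 : HasDerivAt (fun u : ℝ => (u ^ r)⁻¹ * r⁻¹)
      (-(r * u ^ (r - 1)) / (u ^ r) ^ 2 * r⁻¹) u := h2.mul_const _
  have h4 : HasDerivAt (fun u : ℝ => t ^ ((u ^ r)⁻¹ * r⁻¹))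
      (t ^ ((u ^ r)⁻¹ * r⁻¹) * Real.log t * (-(r * u ^ (r - 1)) / (u ^ r) ^ 2 * r⁻¹)) u := by
    have := (Real.hasStrictDerivAt_const_rpow ht.1 ((u ^ r)⁻¹ * r⁻¹)).hasDerivAt.comp u h3
    simpa [Function.comp_def, mul_comm, mul_assoc, mul_left_comm] using this
  have h5 := (hasDerivAt_id u).mul h4
  convert h5 using 1
  · rfl
  · rfl
  · rfl
  have hsub : u ^ (r - 1) = u ^ r / u := by
    rw [Real.rpow_sub hu, Real.rpow_one]
  rw [hsub]
  have hr0 : r ≠ 0 := ne_of_gt hr.1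
  field_simp [hur.ne', hu.ne', hr0]
  rw [id_eq]; ring

lemma st19_phi_bounds {t r : ℝ} (ht : t ∈ Set.Ioo (0:ℝ) 1) (hr : r ∈ Set.Ioo (0:ℝ) 1) {u : ℝ}
    (hu : 0 < u) :
    0 ≤ t ^ ((u ^ r)⁻¹ * r⁻¹) * (1 - (u ^ r)⁻¹ * Real.log t)
      ∧ t ^ ((u ^ r)⁻¹ * r⁻¹) * (1 - (u ^ r)⁻¹ * Real.log t) ≤ 1 := by
  have hur : 0 < u ^ r := Real.rpow_pos_of_pos hu r
  have hy : 0 < (u ^ r)⁻¹ := inv_pos.2 hur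
  have hlt : Real.log t < 0 := Real.log_neg ht.1 ht.2
  have hE : 0 < t ^ ((u ^ r)⁻¹ * r⁻¹) := Real.rpow_pos_of_pos ht.1 _
  constructor
  · have : 0 ≤ 1 - (u ^ r)⁻¹ * Real.log t := by nlinarith
    positivity
  · set y := (u ^ r)⁻¹ with hydef
    have h1 : 1 - y * Real.log t ≤ Real.exp (y * (-Real.log t)) := by
      have := Real.add_one_le_exp (y * (-Real.log t))
      linarith
    have h2 : t ^ (y * r⁻¹) = Real.exp (Real.log t * (y * r⁻¹)) :=
      Real.rpow_def_of_pos ht.1 _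
    calc t ^ (y * r⁻¹) * (1 - y * Real.log t)
        ≤ Real.exp (Real.log t * (y * r⁻¹)) * Real.exp (y * (-Real.log t)) := by
          rw [h2]
          exact mul_le_mul_of_nonneg_left h1 (Real.exp_pos _).le
      _ = Real.exp (Real.log t * (y * r⁻¹) + y * (-Real.log t)) := (Real.exp_add _ _).symm
      _ ≤ 1 := by
          rw [Real.exp_le_one_iff]
          have hrinv : 1 ≤ r⁻¹ := (one_le_inv₀ hr.1).2 hr.2.le
          nlinarith [mul_nonneg hy.le (neg_nonneg.2 hlt.le)]

lemma st19_integral {t r : ℝ} (ht : t ∈ Set.Ioo (0:ℝ) 1) (hr : r ∈ Set.Ioo (0:ℝ) 1) :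
    ∫ u in Set.Ioo (0:ℝ) 1, t ^ ((u ^ r)⁻¹ * r⁻¹) * (1 - (u ^ r)⁻¹ * Real.log t) = t ^ r⁻¹ := by
  set f : ℝ → ℝ := fun u => u * t ^ ((u ^ r)⁻¹ * r⁻¹) with hf
  set φ : ℝ → ℝ := fun u => t ^ ((u ^ r)⁻¹ * r⁻¹) * (1 - (u ^ r)⁻¹ * Real.log t) with hφ
  have hrpow2 : Measurable fun p : ℝ × ℝ => p.1 ^ p.2 := by measurability
  have hg : Measurable fun u : ℝ => (u ^ r)⁻¹ := by fun_prop
  have hφmeas : Measurable φ :=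
    (hrpow2.comp (measurable_const.prodMk (hg.mul_const r⁻¹))).mul
      (measurable_const.sub (hg.mul_const (Real.log t)))
  have hcont : ContinuousOn f (Set.Icc 0 1) := by
    intro x hx
    rcases eq_or_lt_of_le hx.1 with h0 | h0
    · -- x = 0 : squeeze
      have hf0 : f 0 = 0 := by simp [hf]
      rw [← h0]
      unfold ContinuousWithinAt
      rw [hf0]
      apply squeeze_zero' (g := fun u : ℝ => u)
      · filter_upwards [self_mem_nhdsWithin] with u hu
        have hu0 : (0:ℝ) ≤ u := hu.1
        have : (0:ℝ) ≤ t ^ ((u ^ r)⁻¹ * r⁻¹) := Real.rpow_nonneg ht.1.le _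
        exact mul_nonneg hu0 this
      · filter_upwards [self_mem_nhdsWithin] with u hu
        have hu0 : (0:ℝ) ≤ u := hu.1
        have hle1 : t ^ ((u ^ r)⁻¹ * r⁻¹) ≤ 1 := by
          apply Real.rpow_le_one ht.1.le ht.2.le
          exact mul_nonneg (inv_nonneg.2 (Real.rpow_nonneg hu0 r)) (inv_nonneg.2 hr.1.le)
        calc f u ≤ u * 1 := mul_le_mul_of_nonneg_left hle1 hu0
          _ = u := mul_one u
      · exact Filter.tendsto_id.mono_left nhdsWithin_le_nhds
    · exact ((st19_hasDeriv ht hr h0).continuousAt).continuousWithinAt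
  have hderiv : ∀ x ∈ Set.Ioo (0:ℝ) 1, HasDerivWithinAt f (φ x) (Set.Ioi x) x :=
    fun x hx => ((st19_hasDeriv ht hr hx.1)).hasDerivWithinAt
  have hii : IntervalIntegrable φ volume 0 1 := by
    rw [intervalIntegrable_iff_integrableOn_Ioc_of_le zero_le_one]
    apply Measure.integrableOn_of_bounded (M := 1) measure_Ioc_lt_top.ne
      hφmeas.aestronglyMeasurable
    filter_upwards [self_mem_ae_restrict measurableSet_Ioc] with x hx
    obtain ⟨hb0, hb1⟩ := st19_phi_bounds ht hr hx.1
    simp only [hφ, Real.norm_eq_abs, abs_le]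
    exact ⟨by linarith, hb1⟩
  have hFTC := intervalIntegral.integral_eq_sub_of_hasDeriv_right_of_le zero_le_one hcont
    hderiv hii
  rw [← integral_Ioc_eq_integral_Ioo, ← intervalIntegral.integral_of_le zero_le_one, hFTC]
  simp [hf, Real.one_rpow]

lemma st19_phi_meas (t r : ℝ) :
    Measurable fun u : ℝ => t ^ ((u ^ r)⁻¹ * r⁻¹) * (1 - (u ^ r)⁻¹ * Real.log t) := by
  have hrpow2 : Measurable fun p : ℝ × ℝ => p.1 ^ p.2 := by measurability
  have hg : Measurable fun u : ℝ => (u ^ r)⁻¹ := by fun_prop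
  exact (hrpow2.comp (measurable_const.prodMk (hg.mul_const r⁻¹))).mul
    (measurable_const.sub (hg.mul_const (Real.log t)))

lemma st19_phi_integrableOn {t r : ℝ} (ht : t ∈ Set.Ioo (0:ℝ) 1) (hr : r ∈ Set.Ioo (0:ℝ) 1) :
    IntegrableOn (fun u : ℝ => t ^ ((u ^ r)⁻¹ * r⁻¹) * (1 - (u ^ r)⁻¹ * Real.log t))
      (Set.Ioo 0 1) volume := by
  apply Measure.integrableOn_of_bounded (M := 1)
  · rw [Real.volume_Ioo]; norm_num
  · exact (st19_phi_meas t r).aestronglyMeasurable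
  · filter_upwards [self_mem_ae_restrict measurableSet_Ioo] with x hx
    obtain ⟨hb0, hb1⟩ := st19_phi_bounds ht hr hx.1
    rw [Real.norm_eq_abs, abs_le]
    exact ⟨by linarith, hb1⟩

theorem stmt_19 {Ω : Type*} [MeasurableSpace Ω] (P : Measure Ω) [IsProbabilityMeasure P]
    (r : ℝ) (hr : r ∈ Set.Ioo (0 : ℝ) 1)
    (U V₁ V₂ V₃ : Ω → ℝ)
    (hU : Measurable U) (hV₁ : Measurable V₁) (hV₂ : Measurable V₂) (hV₃ : Measurable V₃)
    (hindep : iIndepFun ![U, V₁, V₂, V₃] P)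
    (hUunif : Measure.map U P = volume.restrict (Set.Ioo (0 : ℝ) 1))
    (hV₁unif : Measure.map V₁ P = volume.restrict (Set.Ioo (0 : ℝ) 1))
    (hV₂unif : Measure.map V₂ P = volume.restrict (Set.Ioo (0 : ℝ) 1))
    (hV₃unif : Measure.map V₃ P = volume.restrict (Set.Ioo (0 : ℝ) 1)) :
    Measure.map
        (fun ω => (max (V₁ ω ^ (r / (1 - r))) (V₂ ω * V₃ ω)) ^ (U ω ^ r)) P =
      Measure.map (fun ω => U ω ^ r) P := by
  obtain ⟨hr0, hr1⟩ := hr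
  have h1r : (0:ℝ) < 1 - r := by linarith
  set p : ℝ := r / (1 - r) with hpdef
  have hp : 0 < p := div_pos hr0 h1r
  set μ₀ : Measure ℝ := volume.restrict (Set.Ioo (0:ℝ) 1) with hμ₀
  set A : Ω → ℝ := fun ω => max (V₁ ω ^ p) (V₂ ω * V₃ ω) with hAdef
  set T : Ω → ℝ := fun ω => U ω ^ r with hTdef
  show Measure.map (fun ω => A ω ^ T ω) P = Measure.map T P
  -- measurability
  have hrpow2 : Measurable fun q : ℝ × ℝ => q.1 ^ q.2 := by measurability
  have hrpowr : Measurable fun x : ℝ => x ^ r := by fun_prop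
  have hrpowp : Measurable fun x : ℝ => x ^ p := by fun_prop
  have hX : Measurable fun ω => V₁ ω ^ p := hrpowp.comp hV₁
  have hA : Measurable A := hX.max (hV₂.mul hV₃)
  have hT : Measurable T := hrpowr.comp hU
  have hAT : Measurable fun ω => A ω ^ T ω := hrpow2.comp (hA.prodMk hT)
  -- laws
  have hTlaw : Measure.map T P = Measure.map (fun x : ℝ => x ^ r) μ₀ := by
    rw [← hUunif, Measure.map_map hrpowr hU]; rfl
  have hXlaw : Measure.map (fun ω => V₁ ω ^ p) P = Measure.map (fun x : ℝ => x ^ p) μ₀ := by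
    rw [← hV₁unif, Measure.map_map hrpowp hV₁]; rfl
  have hmeasV : ∀ i, Measurable (![U, V₁, V₂, V₃] i) := by
    intro i; fin_cases i <;> assumption
  have hV23 : IndepFun V₂ V₃ P := hindep.indepFun (show (2 : Fin 4) ≠ 3 by decide)
  have hpairlaw : Measure.map (fun ω => (V₂ ω, V₃ ω)) P = μ₀.prod μ₀ := by
    rw [(indepFun_iff_map_prod_eq_prod_map_map hV₂.aemeasurable hV₃.aemeasurable).1 hV23,
      hV₂unif, hV₃unif]
  have hXY : IndepFun (fun ω => V₁ ω ^ p) (fun ω => V₂ ω * V₃ ω) P := by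
    have h := (hindep.indepFun_prodMk hmeasV 2 3 1 (by decide) (by decide)).symm
    exact h.comp hrpowp (measurable_fst.mul measurable_snd)
  have hTA : IndepFun T A P := by
    have h := hindep.indepFun_finset {0} {1, 2, 3} (by decide) hmeasV
    have h2 := h.comp
      (φ := fun v : (({0} : Finset (Fin 4)) → ℝ) => v ⟨0, by decide⟩ ^ r)
      (ψ := fun v : (({1, 2, 3} : Finset (Fin 4)) → ℝ) =>
        max (v ⟨1, by decide⟩ ^ p) (v ⟨2, by decide⟩ * v ⟨3, by decide⟩))
      (hrpowr.comp (measurable_pi_apply _))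
      (((hrpowp.comp (measurable_pi_apply _))).max
        ((measurable_pi_apply (⟨2, by decide⟩ : ({1, 2, 3} : Finset (Fin 4)))).mul
          (measurable_pi_apply (⟨3, by decide⟩ : ({1, 2, 3} : Finset (Fin 4))))))
    exact h2
  have hmap : Measure.map (fun ω => (T ω, A ω)) P = (Measure.map T P).prod (Measure.map A P) :=
    (indepFun_iff_map_prod_eq_prod_map_map hT.aemeasurable hA.aemeasurable).1 hTA
  haveI : IsProbabilityMeasure (Measure.map A P) := Measure.isProbabilityMeasure_map hA.aemeasurable
  haveI : IsProbabilityMeasure (Measure.map T P) := Measure.isProbabilityMeasure_map hT.aemeasurable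
  haveI : IsProbabilityMeasure (Measure.map (fun ω => A ω ^ T ω) P) :=
    Measure.isProbabilityMeasure_map hAT.aemeasurable
  -- null sets
  have hVnull : ∀ (W : Ω → ℝ), Measurable W → Measure.map W P = μ₀ →
      P (W ⁻¹' (Set.Ioo (0:ℝ) 1)ᶜ) = 0 := by
    intro W hW hWlaw
    rw [← Measure.map_apply hW measurableSet_Ioo.compl, hWlaw, hμ₀,
      Measure.restrict_apply measurableSet_Ioo.compl, compl_inter_self, measure_empty]
  have hgood : ∀ ω, V₁ ω ∈ Set.Ioo (0:ℝ) 1 → V₂ ω ∈ Set.Ioo (0:ℝ) 1 → V₃ ω ∈ Set.Ioo (0:ℝ) 1 →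
      A ω ∈ Set.Ioo (0:ℝ) 1 := by
    intro ω h1 h2 h3
    constructor
    · exact lt_max_of_lt_left (Real.rpow_pos_of_pos h1.1 p)
    · exact max_lt (Real.rpow_lt_one h1.1.le h1.2 hp)
        (by nlinarith [h2.1, h2.2, h3.1, h3.2])
  have hAnull : Measure.map A P ((Set.Ioo (0:ℝ) 1)ᶜ) = 0 := by
    rw [Measure.map_apply hA measurableSet_Ioo.compl]
    apply measure_mono_null
      (t := V₁ ⁻¹' (Set.Ioo (0:ℝ) 1)ᶜ ∪ V₂ ⁻¹' (Set.Ioo (0:ℝ) 1)ᶜ ∪ V₃ ⁻¹' (Set.Ioo (0:ℝ) 1)ᶜ)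
    · intro ω hω
      by_contra hc
      simp only [mem_union, mem_preimage, mem_compl_iff, not_or, not_not] at hc
      exact hω (hgood ω hc.1.1 hc.1.2 hc.2)
    · exact measure_union_null
        (measure_union_null (hVnull V₁ hV₁ hV₁unif) (hVnull V₂ hV₂ hV₂unif))
        (hVnull V₃ hV₃ hV₃unif)
  -- CDF of A
  have hAcdf : ∀ c ∈ Set.Ioo (0:ℝ) 1, Measure.map A P (Set.Iic c)
      = ENNReal.ofReal (c ^ p⁻¹ * (c - c * Real.log c)) := by
    intro c hc
    rw [Measure.map_apply hA measurableSet_Iic]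
    have hsplit : A ⁻¹' Set.Iic c
        = (fun ω => V₁ ω ^ p) ⁻¹' Set.Iic c ∩ (fun ω => V₂ ω * V₃ ω) ⁻¹' Set.Iic c := by
      ext ω
      simp [hAdef, max_le_iff]
    rw [hsplit,
      indepFun_iff_measure_inter_preimage_eq_mul.1 hXY _ _ measurableSet_Iic measurableSet_Iic]
    have e1 : P ((fun ω => V₁ ω ^ p) ⁻¹' Set.Iic c) = ENNReal.ofReal (c ^ p⁻¹) := by
      rw [← Measure.map_apply hX measurableSet_Iic, hXlaw,
        Measure.map_apply hrpowp measurableSet_Iic]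
      rw [hμ₀]
      exact st19_unif_rpow_cdf hp hc
    have e2 : P ((fun ω => V₂ ω * V₃ ω) ⁻¹' Set.Iic c)
        = ENNReal.ofReal (c - c * Real.log c) := by
      have hsm' : MeasurableSet {q : ℝ × ℝ | q.1 * q.2 ≤ c} :=
        measurableSet_le (measurable_fst.mul measurable_snd) measurable_const
      have hpre : (fun ω => V₂ ω * V₃ ω) ⁻¹' Set.Iic c
          = (fun ω => (V₂ ω, V₃ ω)) ⁻¹' {q : ℝ × ℝ | q.1 * q.2 ≤ c} := rfl
      rw [hpre, ← Measure.map_apply (hV₂.prodMk hV₃) hsm', hpairlaw, hμ₀]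
      exact st19_prod_mul_cdf hc
    rw [e1, e2, ← ENNReal.ofReal_mul (Real.rpow_nonneg hc.1.le _)]
  -- CDF of T
  have hTcdf : ∀ t ∈ Set.Ioo (0:ℝ) 1,
      Measure.map T P (Set.Iic t) = ENNReal.ofReal (t ^ r⁻¹) := by
    intro t ht
    rw [hTlaw, Measure.map_apply hrpowr measurableSet_Iic]
    show μ₀ {v : ℝ | v ^ r ≤ t} = _
    rw [hμ₀]
    exact st19_unif_rpow_cdf hr0 ht
  -- CDF of A^T
  have hkey : ∀ t ∈ Set.Ioo (0:ℝ) 1,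
      Measure.map (fun ω => A ω ^ T ω) P (Set.Iic t) = ENNReal.ofReal (t ^ r⁻¹) := by
    intro t ht
    have hsm : MeasurableSet {q : ℝ × ℝ | q.2 ^ q.1 ≤ t} :=
      measurableSet_le (hrpow2.comp (measurable_snd.prodMk measurable_fst)) measurable_const
    rw [Measure.map_apply hAT measurableSet_Iic]
    have hpre : (fun ω => A ω ^ T ω) ⁻¹' Set.Iic t
        = (fun ω => (T ω, A ω)) ⁻¹' {q : ℝ × ℝ | q.2 ^ q.1 ≤ t} := rfl
    rw [hpre, ← Measure.map_apply (hT.prodMk hA) hsm, hmap, Measure.prod_apply hsm, hTlaw,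
      lintegral_map (measurable_measure_prodMk_left hsm) hrpowr, hμ₀]
    have hcongr : ∫⁻ x in Set.Ioo (0:ℝ) 1,
          Measure.map A P (Prod.mk (x ^ r) ⁻¹' {q : ℝ × ℝ | q.2 ^ q.1 ≤ t})
        = ∫⁻ x in Set.Ioo (0:ℝ) 1,
            ENNReal.ofReal (t ^ ((x ^ r)⁻¹ * r⁻¹) * (1 - (x ^ r)⁻¹ * Real.log t)) := by
      apply setLIntegral_congr_fun_ae measurableSet_Ioo
      apply ae_of_all
      intro u hu
      have hτ : u ^ r ∈ Set.Ioo (0:ℝ) 1 :=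
        ⟨Real.rpow_pos_of_pos hu.1 r, Real.rpow_lt_one hu.1.le hu.2 hr0⟩
      have hc : t ^ (u ^ r)⁻¹ ∈ Set.Ioo (0:ℝ) 1 :=
        ⟨Real.rpow_pos_of_pos ht.1 _, Real.rpow_lt_one ht.1.le ht.2 (inv_pos.2 hτ.1)⟩
      have hpre2 : Prod.mk (u ^ r) ⁻¹' {q : ℝ × ℝ | q.2 ^ q.1 ≤ t}
          = {a : ℝ | a ^ (u ^ r) ≤ t} := rfl
      have hseteq : {a : ℝ | a ^ (u ^ r) ≤ t} ∩ Set.Ioo 0 1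
          = Set.Iic (t ^ (u ^ r)⁻¹) ∩ Set.Ioo 0 1 := by
        ext a
        simp only [mem_inter_iff, mem_setOf_eq, mem_Ioo, mem_Iic]
        constructor
        · rintro ⟨h1, h2⟩
          exact ⟨(Real.le_rpow_inv_iff_of_pos h2.1.le ht.1.le hτ.1).2 h1, h2⟩
        · rintro ⟨h1, h2⟩
          exact ⟨(Real.le_rpow_inv_iff_of_pos h2.1.le ht.1.le hτ.1).1 h1, h2⟩
      have hstep : Measure.map A P (Prod.mk (u ^ r) ⁻¹' {q : ℝ × ℝ | q.2 ^ q.1 ≤ t})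
          = Measure.map A P (Set.Iic (t ^ (u ^ r)⁻¹)) := by
        rw [hpre2, ← measure_inter_conull hAnull, hseteq, measure_inter_conull hAnull]
      rw [hstep, hAcdf _ hc]
      congr 1
      rw [Real.log_rpow ht.1]
      have halg : (t ^ (u ^ r)⁻¹) ^ p⁻¹
            * (t ^ (u ^ r)⁻¹ - t ^ (u ^ r)⁻¹ * ((u ^ r)⁻¹ * Real.log t))
          = (t ^ (u ^ r)⁻¹) ^ (p⁻¹ + 1) * (1 - (u ^ r)⁻¹ * Real.log t) := by
        rw [Real.rpow_add hc.1, Real.rpow_one]; ring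
      rw [halg]
      have hexp : p⁻¹ + 1 = r⁻¹ := by
        rw [hpdef, inv_div]; field_simp; ring
      rw [hexp, ← Real.rpow_mul ht.1.le]
    rw [hcongr, ← ofReal_integral_eq_lintegral_ofReal (st19_phi_integrableOn ht ⟨hr0, hr1⟩) ?nn,
      st19_integral ht ⟨hr0, hr1⟩]
    case nn =>
      filter_upwards [self_mem_ae_restrict measurableSet_Ioo] with x hx
      exact (st19_phi_bounds ht ⟨hr0, hr1⟩ hx.1).1
  -- conclude via CDFs
  apply Measure.ext_of_Iic
  intro t
  rcases le_or_gt t 0 with ht0 | ht0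
  · rw [Measure.map_apply hAT measurableSet_Iic, Measure.map_apply hT measurableSet_Iic]
    have z1 : P ((fun ω => A ω ^ T ω) ⁻¹' Set.Iic t) = 0 := by
      apply measure_mono_null ?_ (hVnull V₁ hV₁ hV₁unif)
      intro ω hω
      simp only [mem_preimage, mem_Iic] at hω
      simp only [mem_preimage, mem_compl_iff]
      intro hV
      have hA0 : 0 < A ω := lt_max_of_lt_left (Real.rpow_pos_of_pos hV.1 p)
      have := Real.rpow_pos_of_pos hA0 (T ω)
      linarith
    have z2 : P (T ⁻¹' Set.Iic t) = 0 := by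
      apply measure_mono_null ?_ (hVnull U hU hUunif)
      intro ω hω
      simp only [mem_preimage, mem_Iic] at hω
      simp only [mem_preimage, mem_compl_iff]
      intro hUm
      have : 0 < T ω := Real.rpow_pos_of_pos hUm.1 r
      linarith
    rw [z1, z2]
  rcases lt_or_ge t 1 with ht1 | ht1
  · rw [hkey t ⟨ht0, ht1⟩, hTcdf t ⟨ht0, ht1⟩]
  · have hbig : P (U ⁻¹' (Set.Ioo (0:ℝ) 1)ᶜ ∪ (V₁ ⁻¹' (Set.Ioo (0:ℝ) 1)ᶜ
        ∪ V₂ ⁻¹' (Set.Ioo (0:ℝ) 1)ᶜ ∪ V₃ ⁻¹' (Set.Ioo (0:ℝ) 1)ᶜ)) = 0 :=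
      measure_union_null (hVnull U hU hUunif)
        (measure_union_null
          (measure_union_null (hVnull V₁ hV₁ hV₁unif) (hVnull V₂ hV₂ hV₂unif))
          (hVnull V₃ hV₃ hV₃unif))
    have o1 : Measure.map (fun ω => A ω ^ T ω) P (Set.Iic t) = 1 := by
      rw [Measure.map_apply hAT measurableSet_Iic,
        ← prob_compl_eq_zero_iff (hAT measurableSet_Iic)]
      apply measure_mono_null ?_ hbig
      intro ω hω
      simp only [mem_compl_iff, mem_preimage, mem_Iic, not_le] at hω
      by_contra hc
      simp only [mem_union, mem_preimage, mem_compl_iff, not_or, not_not] at hc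
      have hAω := hgood ω hc.2.1.1 hc.2.1.2 hc.2.2
      have hTω : 0 ≤ T ω := Real.rpow_nonneg hc.1.1.le r
      have : A ω ^ T ω ≤ 1 := Real.rpow_le_one hAω.1.le hAω.2.le hTω
      linarith
    have o2 : Measure.map T P (Set.Iic t) = 1 := by
      rw [Measure.map_apply hT measurableSet_Iic,
        ← prob_compl_eq_zero_iff (hT measurableSet_Iic)]
      apply measure_mono_null ?_ (hVnull U hU hUunif)
      intro ω hω
      simp only [mem_compl_iff, mem_preimage, mem_Iic, not_le] at hω
      simp only [mem_preimage, mem_compl_iff]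
      intro hUm
      have : T ω ≤ 1 := (Real.rpow_lt_one hUm.1.le hUm.2 hr0).le
      linarith
    rw [o1, o2]
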